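/- Let R be a unital ring, n ≥ 2, and M a 2-torsion free Mₙ(R)-bimodule. Then every generalized Jordan derivation D : Mₙ(R) → M is a generalized derivation, i.e., D(AB) = D(A)B + AD(B) - AD(1)B for all A, B. -/

import Mathlib

/-- A (not necessarily unital) bimodule structure of a ring `A` on an
additive group `M`, given by a left action `l` and a right action `r`. -/
structure RingBimod (A M : Type*) [Ring A] [AddCommGroup M] where
  l : A → M → M
  r : M → A → M
  l_add : ∀ a m₁ m₂, l a (m₁ + m₂) = l a m₁ + l a m₂
  add_l : ∀ a₁ a₂ m, l (a₁ + a₂) m = l a₁ m + l a₂ m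
  r_add : ∀ m₁ m₂ a, r (m₁ + m₂) a = r m₁ a + r m₂ a
  add_r : ∀ m a₁ a₂, r m (a₁ + a₂) = r m a₁ + r m a₂
  mul_l : ∀ a₁ a₂ m, l (a₁ * a₂) m = l a₁ (l a₂ m)
  r_mul : ∀ m a₁ a₂, r m (a₁ * a₂) = r (r m a₁) a₂
  l_r : ∀ a₁ m a₂, l a₁ (r m a₂) = r (l a₁ m) a₂

namespace JHelper

variable {A : Type*} [Ring A] {M : Type*} [AddCommGroup M]

def lH (bm : RingBimod A M) (a : A) : M →+ M :=
  AddMonoidHom.mk' (bm.l a) (bm.l_add a)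

def rH (bm : RingBimod A M) (a : A) : M →+ M :=
  AddMonoidHom.mk' (fun m => bm.r m a) (fun m₁ m₂ => bm.r_add m₁ m₂ a)

def rH' (bm : RingBimod A M) (m : M) : A →+ M :=
  AddMonoidHom.mk' (fun a => bm.r m a) (fun a₁ a₂ => bm.add_r m a₁ a₂)

def lH' (bm : RingBimod A M) (m : M) : A →+ M :=
  AddMonoidHom.mk' (fun a => bm.l a m) (fun a₁ a₂ => bm.add_l a₁ a₂ m)

variable (bm : RingBimod A M)

lemma l_zero (a : A) : bm.l a (0:M) = 0 := (lH bm a).map_zero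
lemma r_zero (a : A) : bm.r (0:M) a = 0 := (rH bm a).map_zero
lemma l_neg (a : A) (m : M) : bm.l a (-m) = - bm.l a m := (lH bm a).map_neg m
lemma r_neg (a : A) (m : M) : bm.r (-m) a = - bm.r m a := (rH bm a).map_neg m
lemma l_sub (a : A) (m m' : M) : bm.l a (m - m') = bm.l a m - bm.l a m' := (lH bm a).map_sub m m'
lemma r_sub (a : A) (m m' : M) : bm.r (m - m') a = bm.r m a - bm.r m' a := (rH bm a).map_sub m m'
lemma zero_l (m : M) : bm.l (0:A) m = 0 := (lH' bm m).map_zero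
lemma zero_r (m : M) : bm.r m (0:A) = 0 := (rH' bm m).map_zero
lemma neg_l (a : A) (m : M) : bm.l (-a) m = - bm.l a m := (lH' bm m).map_neg a
lemma neg_r (a : A) (m : M) : bm.r m (-a) = - bm.r m a := (rH' bm m).map_neg a
lemma sub_l (a b : A) (m : M) : bm.l (a - b) m = bm.l a m - bm.l b m := (lH' bm m).map_sub a b
lemma sub_r (a b : A) (m : M) : bm.r m (a - b) = bm.r m a - bm.r m b := (rH' bm m).map_sub a b
lemma l_sum {ι : Type*} (a : A) (s : Finset ι) (F : ι → M) :
    bm.l a (∑ i ∈ s, F i) = ∑ i ∈ s, bm.l a (F i) := map_sum (lH bm a) F s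
lemma r_sum {ι : Type*} (a : A) (s : Finset ι) (F : ι → M) :
    bm.r (∑ i ∈ s, F i) a = ∑ i ∈ s, bm.r (F i) a := map_sum (rH bm a) F s

/-- additive map -/
abbrev IsAdd (f : A → M) : Prop := ∀ x y, f (x + y) = f x + f y

/-- Jordan derivation -/
abbrev IsJord (bm : RingBimod A M) (f : A → M) : Prop :=
  ∀ x y, f (x*y + y*x) = bm.r (f x) y + bm.l x (f y) + bm.r (f y) x + bm.l y (f x)

lemma two_cancel (htf : ∀ m : M, m + m = 0 → m = 0) {a b : M} (h : a + a = b + b) : a = b := by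
  have h2 : (a - b) + (a - b) = 0 := by
    have : (a - b) + (a - b) = (a + a) - (b + b) := by abel
    rw [this, h, sub_self]
  exact sub_eq_zero.mp (htf _ h2)

variable {bm}

lemma f_zero {f : A → M} (hf : IsAdd f) : f 0 = 0 := by
  have := hf 0 0
  simpa using this.symm

lemma T1 (htf : ∀ m : M, m + m = 0 → m = 0) {f : A → M} (hf : IsAdd f) (hJ : IsJord bm f)
    (x : A) : f (x*x) = bm.r (f x) x + bm.l x (f x) := by
  have h := hJ x x
  rw [hf] at h
  refine two_cancel htf ?_
  rw [h]; abel

lemma sqzero (htf : ∀ m : M, m + m = 0 → m = 0) {f : A → M} (hf : IsAdd f) (hJ : IsJord bm f)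
    {x : A} (hx : x*x = 0) : bm.r (f x) x + bm.l x (f x) = 0 := by
  have h := T1 htf hf hJ x
  rw [hx, f_zero hf] at h
  exact h.symm

lemma T2 (htf : ∀ m : M, m + m = 0 → m = 0) {f : A → M} (hf : IsAdd f) (hJ : IsJord bm f)
    (x y : A) :
    f (x*y*x) = bm.r (f x) (y*x) + bm.r (bm.l x (f y)) x + bm.l (x*y) (f x) := by
  have e1 : x*(x*y + y*x) + (x*y + y*x)*x = (x*x*y + y*(x*x)) + (x*y*x + x*y*x) := by
    noncomm_ring
  have h1 := hJ x (x*y + y*x)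
  rw [e1, hf, hJ (x*x) y, hf, hJ x y, T1 htf hf hJ x] at h1
  have h2 := eq_sub_of_add_eq' h1
  refine two_cancel htf ?_
  rw [h2]
  simp only [bm.l_add, bm.add_l, bm.r_add, bm.add_r, bm.l_r, ← bm.mul_l, ← bm.r_mul, mul_assoc]
  abel

lemma T3 (htf : ∀ m : M, m + m = 0 → m = 0) {f : A → M} (hf : IsAdd f) (hJ : IsJord bm f)
    (x y z : A) :
    f (x*y*z + z*y*x) = bm.r (f x) (y*z) + bm.r (bm.l x (f y)) z + bm.l (x*y) (f z)
      + bm.r (f z) (y*x) + bm.r (bm.l z (f y)) x + bm.l (z*y) (f x) := by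
  have h := T2 htf hf hJ (x+z) y
  have e1 : (x+z)*y*(x+z) = (x*y*x + z*y*z) + (x*y*z + z*y*x) := by noncomm_ring
  rw [e1, hf, hf, T2 htf hf hJ x y, T2 htf hf hJ z y] at h
  have h2 := eq_sub_of_add_eq' h
  rw [h2]
  simp only [hf, mul_add, add_mul, bm.l_add, bm.add_l, bm.r_add, bm.add_r, bm.l_r,
    ← bm.mul_l, ← bm.r_mul, mul_assoc]
  abel

end JHelper
namespace JHelper

variable {A : Type*} [Ring A] {M : Type*} [AddCommGroup M] {bm : RingBimod A M}

/-- subtracting an inner derivation preserves additivity -/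
lemma inner_add {f : A → M} (hf : IsAdd f) (w : M) :
    IsAdd (fun x => f x - (bm.r w x - bm.l x w)) := by
  intro x y
  simp only [hf, bm.add_r, bm.add_l]
  abel

/-- subtracting an inner derivation preserves the Jordan property -/
lemma inner_jord {f : A → M} (hJ : IsJord bm f) (w : M) :
    IsJord bm (fun x => f x - (bm.r w x - bm.l x w)) := by
  intro x y
  simp only [hJ x y, bm.add_r, bm.add_l, l_sub, r_sub, l_neg, r_neg,
    bm.l_r, ← bm.mul_l, ← bm.r_mul]
  abel

/-- subtracting an inner derivation does not change the derivation defect -/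
lemma inner_defect (f : A → M) (w : M) (x y : A) :
    f (x*y) - bm.r (f x) y - bm.l x (f y)
      = (fun t => f t - (bm.r w t - bm.l t w)) (x*y)
        - bm.r ((fun t => f t - (bm.r w t - bm.l t w)) x) y
        - bm.l x ((fun t => f t - (bm.r w t - bm.l t w)) y) := by
  simp only [l_sub, r_sub, l_neg, r_neg, bm.l_r, ← bm.mul_l, ← bm.r_mul]
  abel

/-- Phase A : reduction to a "bi-unital valued" Jordan derivation -/
lemma phaseA (htf : ∀ m : M, m + m = 0 → m = 0) {f : A → M} (hf : IsAdd f) (hJ : IsJord bm f) :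
    ∃ P : A → M, IsAdd P ∧ IsJord bm P ∧ (∀ x, bm.r (P x) 1 = P x) ∧
      (∀ x y, f (x*y) - bm.r (f x) y - bm.l x (f y)
        = P (x*y) - bm.r (P x) y - bm.l x (P y)) := by
  set P : A → M := fun x => bm.r (bm.l 1 (f x)) 1 with hP
  have U1 : ∀ x, f x + f x
      = bm.r (f x) 1 + bm.l x (f 1) + bm.r (f 1) x + bm.l 1 (f x) := by
    intro x
    have h := hJ x 1
    rw [mul_one, one_mul, hf] at h
    exact h
  have A6 : f 1 = bm.l 1 (f 1) + bm.r (f 1) 1 := by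
    refine two_cancel htf ?_
    rw [U1 1]; abel
  have A7 : ∀ x, bm.r (bm.l x (f 1)) 1 = 0 := by
    intro x
    have h := congrArg (bm.l x) A6
    rw [bm.l_add, bm.l_r, ← bm.mul_l, mul_one] at h
    exact (add_eq_left.mp h.symm)
  have A7' : ∀ x y, bm.r (bm.l x (f 1)) y = 0 := by
    intro x y
    have h : bm.r (bm.l x (f 1)) y = bm.r (bm.r (bm.l x (f 1)) 1) y := by
      rw [← bm.r_mul, one_mul]
    rw [h, A7, r_zero]
  have V1 : ∀ x, bm.r (bm.l 1 (f 1)) x = 0 := by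
    intro x
    have h := congrArg (fun m => bm.r (bm.l 1 m) 1) (U1 x)
    simp only [bm.l_add, bm.r_add, bm.l_r, ← bm.mul_l, ← bm.r_mul, one_mul, mul_one] at h
    rw [A7, add_zero] at h
    have h3 : bm.r (bm.l 1 (f x)) 1 + bm.r (bm.l 1 (f x)) 1
        = (bm.r (bm.l 1 (f x)) 1 + bm.r (bm.l 1 (f x)) 1) + bm.r (bm.l 1 (f 1)) x := by
      conv_lhs => rw [h]
      abel
    exact add_eq_left.mp h3.symm
  have V2' : ∀ x, bm.l 1 (f x) = P x + bm.l x (f 1) := by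
    intro x
    show bm.l 1 (f x) = bm.r (bm.l 1 (f x)) 1 + bm.l x (f 1)
    have h := congrArg (bm.l 1) (U1 x)
    simp only [bm.l_add, bm.l_r, ← bm.mul_l, one_mul, mul_one] at h
    rw [V1] at h
    have h3 : bm.l 1 (f x) + bm.l 1 (f x)
        = bm.l 1 (f x) + (bm.r (bm.l 1 (f x)) 1 + bm.l x (f 1)) := by
      conv_lhs => rw [h]
      abel
    exact add_left_cancel h3
  have V3' : ∀ x, bm.r (f x) 1 = P x + bm.r (f 1) x := by
    intro x
    show bm.r (f x) 1 = bm.r (bm.l 1 (f x)) 1 + bm.r (f 1) x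
    have h := congrArg (fun m => bm.r m 1) (U1 x)
    simp only [bm.r_add, ← bm.r_mul, one_mul, mul_one] at h
    rw [A7] at h
    have h3 : bm.r (f x) 1 + bm.r (f x) 1
        = bm.r (f x) 1 + (bm.r (bm.l 1 (f x)) 1 + bm.r (f 1) x) := by
      conv_lhs => rw [h]
      abel
    exact add_left_cancel h3
  have V5 : ∀ x, f x = P x + bm.l x (f 1) + bm.r (f 1) x := by
    intro x
    refine two_cancel htf ?_
    rw [U1 x, V3' x, V2' x]
    abel
  refine ⟨P, ?_, ?_, ?_, ?_⟩
  · intro x y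
    simp only [hP, hf, bm.l_add, bm.r_add]
  · intro x y
    have h := congrArg (fun m => bm.r (bm.l 1 m) 1) (hJ x y)
    simp only [bm.l_add, bm.r_add, bm.l_r, ← bm.mul_l, ← bm.r_mul, one_mul, mul_one] at h
    simp only [hP, bm.l_r, ← bm.mul_l, ← bm.r_mul, one_mul, mul_one]
    exact h
  · intro x
    simp only [hP]
    rw [← bm.r_mul, one_mul]
  · intro x y
    rw [V5 (x*y), V5 x, V5 y]
    simp only [bm.r_add, bm.l_add, bm.l_r, ← bm.mul_l, ← bm.r_mul, A7']
    abel

end JHelper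
namespace JHelper

open Matrix

variable {R : Type*} [Ring R] {n : ℕ} {M : Type*} [AddCommGroup M]
variable {bm : RingBimod (Matrix (Fin n) (Fin n) R) M}

lemma EmulE (i j k l : Fin n) (a b : R) :
    Matrix.single i j a * Matrix.single k l b
      = if j = k then Matrix.single i l (a*b) else 0 := by
  by_cases h : j = k
  · subst h; rw [if_pos rfl, Matrix.single_mul_single_same]
  · rw [if_neg h, Matrix.single_mul_single_of_ne _ _ _ _ h]

lemma one_eq_sumE : (1 : Matrix (Fin n) (Fin n) R) = ∑ k, Matrix.single k k (1:R) := by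
  ext i j
  rw [Matrix.sum_apply]
  by_cases h : i = j
  · subst h
    rw [Matrix.one_apply_eq]
    rw [Finset.sum_eq_single_of_mem i (Finset.mem_univ i)]
    · rw [Matrix.single_apply_same]
    · intro k _ hk
      exact Matrix.single_apply_of_ne _ _ _ _ _ (by tauto)
  · rw [Matrix.one_apply_ne h]
    symm
    apply Finset.sum_eq_zero
    intro k _
    refine Matrix.single_apply_of_ne _ _ _ _ _ ?_
    rintro ⟨rfl, rfl⟩
    exact h rfl

/-- Phase C1 : the value on diagonal matrix units is an inner commutator. -/
lemma normDiag (htf : ∀ m : M, m + m = 0 → m = 0) {f : Matrix (Fin n) (Fin n) R → M}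
    (hf : IsAdd f) (hJ : IsJord bm f)
    (hun : ∀ x, bm.r (f x) 1 = f x) (p : Fin n) :
    f (Matrix.single p p (1:R)) =
      bm.r (∑ k, bm.r (f (Matrix.single k k (1:R))) (Matrix.single k k (1:R)))
        (Matrix.single p p (1:R))
      - bm.l (Matrix.single p p (1:R))
        (∑ k, bm.r (f (Matrix.single k k (1:R))) (Matrix.single k k (1:R))) := by
  set E : Fin n → Fin n → Matrix (Fin n) (Fin n) R := fun i j => Matrix.single i j 1 with hE
  have hmul : ∀ i j k l : Fin n, E i j * E k l = if j = k then E i l else 0 := by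
    intro i j k l
    rw [hE]; simp only [EmulE, one_mul]
  have epp : ∀ q : Fin n, E q q * E q q = E q q := by
    intro q; rw [hmul]; simp
  have hmulne : ∀ (i j k l : Fin n), j ≠ k → E i j * E k l = 0 := by
    intro i j k l h; rw [hmul, if_neg h]
  have a_p : f (E p p) = bm.r (f (E p p)) (E p p) + bm.l (E p p) (f (E p p)) := by
    have h := T1 htf hf hJ (E p p)
    rwa [epp] at h
  have G4 : bm.r (bm.l (E p p) (f (E p p))) (E p p) = 0 := by
    have h := congrArg (fun m => bm.r (bm.l (E p p) m) (E p p)) a_p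
    simp only [bm.l_add, bm.r_add, bm.l_r, ← bm.mul_l, ← bm.r_mul, epp] at h
    exact add_eq_left.mp h.symm
  have offdiag : ∀ k, k ≠ p → bm.r (bm.l (E k k) (f (E p p))) (E k k) = 0 := by
    intro k hk
    have h := T2 htf hf hJ (E k k) (E p p)
    rw [hmulne k k p p hk, hmulne p p k k (fun hc => hk hc.symm), zero_mul, f_zero hf] at h
    simpa [r_zero, zero_r, zero_l, l_zero] using h.symm
  have pair : ∀ k, k ≠ p →
      bm.r (f (E p p)) (E k k) + bm.r (bm.l (E p p) (f (E k k))) (E k k) = 0 := by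
    intro k hk
    have h := hJ (E p p) (E k k)
    rw [hmulne p p k k (fun hc => hk hc.symm), hmulne k k p p hk, add_zero, f_zero hf] at h
    have h2 := congrArg (fun m => bm.r m (E k k)) h
    simp only [bm.r_add, ← bm.r_mul, epp, hmulne p p k k (fun hc => hk hc.symm),
      zero_r, r_zero, add_zero] at h2
    rw [offdiag k hk, add_zero] at h2
    exact h2.symm
  have hsum : f (E p p) = ∑ k, bm.r (f (E p p)) (E k k) := by
    calc f (E p p) = bm.r (f (E p p)) 1 := (hun _).symm
    _ = bm.r (f (E p p)) (∑ k, E k k) := by rw [← one_eq_sumE]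
    _ = ∑ k, bm.r (f (E p p)) (E k k) := map_sum (rH' bm (f (E p p))) _ _
  have e_rm1 : bm.r (∑ k, bm.r (f (E k k)) (E k k)) (E p p) = bm.r (f (E p p)) (E p p) := by
    rw [r_sum]
    rw [Finset.sum_eq_single_of_mem p (Finset.mem_univ p)]
    · rw [← bm.r_mul, epp]
    · intro k _ hk
      rw [← bm.r_mul, hmulne k k p p hk, zero_r]
  have e_lm1 : bm.l (E p p) (∑ k, bm.r (f (E k k)) (E k k))
      = ∑ k, bm.r (bm.l (E p p) (f (E k k))) (E k k) := by
    rw [l_sum]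
    exact Finset.sum_congr rfl (fun k _ => bm.l_r _ _ _)
  rw [e_rm1, e_lm1]
  conv_lhs => rw [hsum]
  rw [← Finset.add_sum_erase Finset.univ (fun k => bm.r (f (E p p)) (E k k))
        (Finset.mem_univ p),
      ← Finset.add_sum_erase Finset.univ
        (fun k => bm.r (bm.l (E p p) (f (E k k))) (E k k)) (Finset.mem_univ p)]
  rw [show bm.r (bm.l (E p p) (f (E p p))) (E p p) = 0 from G4, zero_add]
  have hcong : ∑ k ∈ Finset.univ.erase p, bm.r (f (E p p)) (E k k)
      = ∑ k ∈ Finset.univ.erase p, (- bm.r (bm.l (E p p) (f (E k k))) (E k k)) :=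
    Finset.sum_congr rfl
      (fun k hk => eq_neg_of_add_eq_zero_left (pair k (Finset.mem_erase.mp hk).1))
  rw [hcong, Finset.sum_neg_distrib]
  abel

end JHelper
namespace JHelper

open Matrix

variable {R : Type*} [Ring R] {n : ℕ} {M : Type*} [AddCommGroup M]
variable {bm : RingBimod (Matrix (Fin n) (Fin n) R) M}

lemma Ems (i j l : Fin n) (a b : R) :
    Matrix.single i j a * Matrix.single j l b = Matrix.single i l (a*b) :=
  Matrix.single_mul_single_same a i j l b

lemma Emn {j k : Fin n} (h : j ≠ k) (i l : Fin n) (a b : R) :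
    Matrix.single i j a * Matrix.single k l b = 0 :=
  Matrix.single_mul_single_of_ne a i j k h b

lemma Ems1 (i j l : Fin n) :
    Matrix.single i j (1:R) * Matrix.single j l (1:R) = Matrix.single i l 1 := by
  rw [Ems, one_mul]

/-- corner annihilation for off-diagonal units -/
lemma offblock (htf : ∀ m : M, m + m = 0 → m = 0)
    {g : Matrix (Fin n) (Fin n) R → M} (hg : IsAdd g) (hJ : IsJord bm g)
    {p q : Fin n} (hpq : p ≠ q) :
    bm.r (bm.l (Matrix.single q q (1:R)) (g (Matrix.single p q 1))) (Matrix.single p p 1)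
      = 0 := by
  have he := sqzero htf hg hJ (x := Matrix.single p q (1:R)) (Emn (Ne.symm hpq) p q 1 1)
  have h2 := congrArg
    (fun m => bm.l (Matrix.single q q (1:R)) (bm.r m (Matrix.single q p 1))) he
  simp only [bm.l_add, bm.r_add, bm.l_r, ← bm.mul_l, ← bm.r_mul, l_zero, r_zero] at h2
  rw [Ems1 p q p, Emn (Ne.symm hpq) q q (1:R) (1:R)] at h2
  simpa only [zero_l, r_zero, add_zero] using h2

/-- Peirce sandwich for off-diagonal units, once the diagonal units are killed. -/
lemma sandwich_offdiag (htf : ∀ m : M, m + m = 0 → m = 0)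
    {g : Matrix (Fin n) (Fin n) R → M} (hg : IsAdd g) (hJ : IsJord bm g)
    (hdiag : ∀ p : Fin n, g (Matrix.single p p (1:R)) = 0) {p q : Fin n} (hpq : p ≠ q) :
    g (Matrix.single p q (1:R))
      = bm.r (bm.l (Matrix.single p p 1) (g (Matrix.single p q 1)))
          (Matrix.single q q 1) := by
  have h := T3 htf hg hJ (Matrix.single p p 1) (Matrix.single p q 1) (Matrix.single q q 1)
  simp only [Ems1 p p q, Ems1 p q q, Emn (Ne.symm hpq), zero_mul, mul_zero,
    hdiag, l_zero, r_zero, zero_l, zero_r, add_zero, zero_add] at h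
  rw [offblock htf hg hJ hpq, add_zero] at h
  exact h

end JHelper
namespace JHelper

open Matrix

variable {R : Type*} [Ring R] {n : ℕ} {M : Type*} [AddCommGroup M]
variable {bm : RingBimod (Matrix (Fin n) (Fin n) R) M}

lemma normAll (htf : ∀ m : M, m + m = 0 → m = 0) {f : Matrix (Fin n) (Fin n) R → M}
    (hf : IsAdd f) (hJ : IsJord bm f) (hun : ∀ x, bm.r (f x) 1 = f x) (o : Fin n) :
    ∃ g : Matrix (Fin n) (Fin n) R → M, IsAdd g ∧ IsJord bm g ∧
      (∀ p q : Fin n, g (Matrix.single p q (1:R)) = 0) ∧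
      (∀ x y, f (x*y) - bm.r (f x) y - bm.l x (f y)
        = g (x*y) - bm.r (g x) y - bm.l x (g y)) := by
  set m1 : M := ∑ k, bm.r (f (Matrix.single k k (1:R))) (Matrix.single k k (1:R)) with hm1
  set g1 : Matrix (Fin n) (Fin n) R → M := fun x => f x - (bm.r m1 x - bm.l x m1) with hg1
  have hg1a : IsAdd g1 := inner_add hf m1
  have hg1J : IsJord bm g1 := inner_jord hJ m1
  have hdiag1 : ∀ p, g1 (Matrix.single p p (1:R)) = 0 := by
    intro p
    show f _ - (bm.r m1 _ - bm.l _ m1) = 0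
    rw [hm1, normDiag htf hf hJ hun p]
    exact sub_self _
  have hsand : ∀ p q, p ≠ q → g1 (Matrix.single p q (1:R))
      = bm.r (bm.l (Matrix.single p p 1) (g1 (Matrix.single p q 1))) (Matrix.single q q 1) :=
    fun p q h => sandwich_offdiag htf hg1a hg1J hdiag1 h
  set m2 : M := ∑ k, bm.r (g1 (Matrix.single k o (1:R))) (Matrix.single o k (1:R)) with hm2
  set g2 : Matrix (Fin n) (Fin n) R → M := fun x => g1 x - (bm.r m2 x - bm.l x m2) with hg2
  have hg2a : IsAdd g2 := inner_add hg1a m2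
  have hg2J : IsJord bm g2 := inner_jord hg1J m2
  have hm2r : ∀ p q : Fin n, bm.r m2 (Matrix.single p q (1:R))
      = bm.r (g1 (Matrix.single p o 1)) (Matrix.single o q 1) := by
    intro p q
    rw [hm2, r_sum]
    rw [Finset.sum_eq_single_of_mem p (Finset.mem_univ p)]
    · rw [← bm.r_mul, Ems1 o p q]
    · intro k _ hk
      rw [← bm.r_mul, Emn hk o q (1:R) (1:R), zero_r]
  have hm2l : ∀ p q : Fin n, q ≠ o → bm.l (Matrix.single p q (1:R)) m2
      = bm.r (bm.l (Matrix.single p q 1) (g1 (Matrix.single q o 1))) (Matrix.single o q 1) := by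
    intro p q hq
    rw [hm2, l_sum]
    rw [Finset.sum_eq_single_of_mem q (Finset.mem_univ q)]
    · rw [bm.l_r]
    · intro k _ hk
      by_cases hko : k = o
      · rw [hko, hdiag1 o, r_zero, l_zero]
      · rw [hsand k o hko, ← bm.r_mul, Ems1 o o k, bm.l_r, ← bm.mul_l,
          Emn (Ne.symm hk) p k (1:R) (1:R), zero_l, r_zero]
  have hoq : ∀ q, q ≠ o → g1 (Matrix.single o q (1:R))
      = - bm.r (bm.l (Matrix.single o q 1) (g1 (Matrix.single q o 1))) (Matrix.single o q 1) := by
    intro q hq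
    have hoq' : o ≠ q := Ne.symm hq
    have h := hg1J (Matrix.single o q (1:R)) (Matrix.single q o 1)
    rw [Ems1 o q o, Ems1 q o q, hg1a, hdiag1 o, hdiag1 q] at h
    have h2 := congrArg (fun m => bm.r m (Matrix.single o q (1:R))) h
    simp only [bm.r_add, ← bm.r_mul, bm.l_r, r_zero, zero_add, add_zero] at h2
    rw [Ems1 q o q, Emn hq o q (1:R) (1:R), zero_r] at h2
    have e1 : bm.r (g1 (Matrix.single o q (1:R))) (Matrix.single q q 1)
        = g1 (Matrix.single o q 1) := by
      conv_lhs => rw [hsand o q hoq']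
      rw [← bm.r_mul, Ems1 q q q, ← hsand o q hoq']
    have e4 : bm.r (bm.l (Matrix.single q o (1:R)) (g1 (Matrix.single o q 1)))
        (Matrix.single o q 1) = 0 := by
      conv_lhs => rw [hsand o q hoq']
      rw [bm.l_r, ← bm.mul_l, Ems1 q o o, ← bm.r_mul, Emn hq q q (1:R) (1:R), zero_r]
    rw [e1, e4, add_zero, add_zero] at h2
    exact eq_neg_of_add_eq_zero_left h2.symm
  have hg2z : ∀ p q : Fin n, g2 (Matrix.single p q (1:R)) = 0 := by
    intro p q
    show g1 (Matrix.single p q (1:R))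
      - (bm.r m2 (Matrix.single p q (1:R)) - bm.l (Matrix.single p q (1:R)) m2) = 0
    rw [hm2r p q]
    by_cases hq : q = o
    · rw [hq]
      have hl0 : bm.l (Matrix.single p o (1:R)) m2 = 0 := by
        rw [hm2, l_sum]
        apply Finset.sum_eq_zero
        intro k _
        by_cases hko : k = o
        · rw [hko, hdiag1 o, r_zero, l_zero]
        · rw [hsand k o hko, ← bm.r_mul, Ems1 o o k, bm.l_r, ← bm.mul_l,
            Emn (Ne.symm hko) p k (1:R) (1:R), zero_l, r_zero]
      rw [hl0, sub_zero]
      by_cases hp : p = o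
      · rw [hp, hdiag1 o, r_zero, sub_zero]
      · conv_lhs => rw [hsand p o hp]
        rw [← bm.r_mul, Ems1 o o o, sub_self]
    · rw [hm2l p q hq]
      by_cases hp : p = q
      · rw [hp, hdiag1 q]
        conv_lhs => rw [hsand q o hq]
        rw [← bm.r_mul, Ems1 o o q, bm.l_r, ← bm.mul_l, Ems1 q q q, ← bm.r_mul, Ems1 o o q,
          sub_self, sub_zero]
      · by_cases hpo : p = o
        · rw [hpo, hdiag1 o, r_zero, hoq q hq]
          abel
        · have h := T3 htf hg1a hg1J (Matrix.single p o 1) (Matrix.single o o 1)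
            (Matrix.single o q 1)
          simp only [Ems1 p o o, Ems1 p o q, Ems1 o o q, Emn hq, Emn (Ne.symm hpo),
            zero_mul, mul_zero, hdiag1, l_zero, r_zero, zero_l, zero_r,
            add_zero, zero_add] at h
          rw [h, hoq q hq, l_neg, bm.l_r, ← bm.mul_l, Ems1 p o q]
          abel
  refine ⟨g2, hg2a, hg2J, hg2z, ?_⟩
  intro x y
  calc f (x*y) - bm.r (f x) y - bm.l x (f y)
      = g1 (x*y) - bm.r (g1 x) y - bm.l x (g1 y) := inner_defect f m1 x y
    _ = g2 (x*y) - bm.r (g2 x) y - bm.l x (g2 y) := inner_defect g1 m2 x y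

end JHelper
namespace JHelper

open Matrix

variable {R : Type*} [Ring R] {n : ℕ} {M : Type*} [AddCommGroup M]
variable {bm : RingBimod (Matrix (Fin n) (Fin n) R) M}

lemma finalD (htf : ∀ m : M, m + m = 0 → m = 0) {g : Matrix (Fin n) (Fin n) R → M}
    (hg : IsAdd g) (hJ : IsJord bm g) {o t : Fin n} (hot : o ≠ t)
    (hz : ∀ p q : Fin n, g (Matrix.single p q (1:R)) = 0) :
    ∀ x y, g (x*y) = bm.r (g x) y + bm.l x (g y) := by
  have W2 : ∀ a : R, g (Matrix.single o o a)
      = bm.r (bm.l (Matrix.single o o 1) (g (Matrix.single o o a)))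
          (Matrix.single o o 1) := by
    intro a
    have h := hJ (Matrix.single o o a) (Matrix.single o o (1:R))
    simp only [Ems, mul_one, one_mul] at h
    rw [hg] at h
    simp only [hz, l_zero, r_zero, add_zero, zero_add] at h
    have hi : bm.l (Matrix.single o o (1:R)) (g (Matrix.single o o a))
        = bm.r (bm.l (Matrix.single o o 1) (g (Matrix.single o o a)))
            (Matrix.single o o 1) := by
      have h2 := congrArg (bm.l (Matrix.single o o (1:R))) h
      simp only [bm.l_add, bm.l_r, ← bm.mul_l, Ems, one_mul] at h2
      exact add_right_cancel h2
    have hii : bm.r (g (Matrix.single o o a)) (Matrix.single o o (1:R))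
        = bm.r (bm.l (Matrix.single o o 1) (g (Matrix.single o o a)))
            (Matrix.single o o 1) := by
      have h2 := congrArg (fun m => bm.r m (Matrix.single o o (1:R))) h
      simp only [bm.r_add, ← bm.r_mul, bm.l_r, Ems, one_mul, mul_one] at h2
      exact add_left_cancel h2
    refine two_cancel htf ?_
    conv_lhs => rw [h, hi, hii]
  have zyx0 : ∀ (i j : Fin n) (a : R), ¬(i = o ∧ j = o) →
      Matrix.single o j (1:R) * Matrix.single o o a * Matrix.single i o 1 = 0 := by
    intro i j a hnot
    by_cases hjo : j = o
    · have hio : i ≠ o := fun h => hnot ⟨h, hjo⟩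
      rw [hjo, Ems, one_mul, Emn (Ne.symm hio)]
    · rw [Emn hjo o o (1:R) a, zero_mul]
  have hterm : ∀ (i j : Fin n) (a : R), ¬(i = o ∧ j = o) →
      bm.r (bm.l (Matrix.single o j (1:R)) (g (Matrix.single o o a)))
        (Matrix.single i o 1) = 0 := by
    intro i j a hnot
    rw [W2 a, bm.l_r, ← bm.mul_l]
    by_cases hjo : j = o
    · have hio : i ≠ o := fun h => hnot ⟨h, hjo⟩
      rw [hjo, Ems, one_mul, ← bm.r_mul, Emn (Ne.symm hio) o o (1:R) (1:R), zero_r]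
    · rw [Emn hjo o o (1:R) (1:R), zero_l, r_zero, r_zero]
  have W3 : ∀ (i j : Fin n) (a : R), g (Matrix.single i j a)
      = bm.r (bm.l (Matrix.single i o 1) (g (Matrix.single o o a)))
          (Matrix.single o j 1) := by
    intro i j a
    by_cases hoo : i = o ∧ j = o
    · rw [hoo.1, hoo.2]
      exact W2 a
    · have h := T3 htf hg hJ (Matrix.single i o 1) (Matrix.single o o a)
        (Matrix.single o j 1)
      have e1 : Matrix.single i o (1:R) * Matrix.single o o a = Matrix.single i o a := by
        rw [Ems, one_mul]
      have e2 : Matrix.single i o a * Matrix.single o j (1:R) = Matrix.single i j a := by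
        rw [Ems, mul_one]
      simp only [e1, e2, zyx0 i j a hoo, add_zero, hz, l_zero, r_zero, zero_l, zero_r,
        zero_add] at h
      rw [hterm i j a hoo, add_zero] at h
      exact h
  have KEY : ∀ a b : R, g (Matrix.single o o (a*b))
      = bm.r (bm.l (Matrix.single o o 1) (g (Matrix.single o o a))) (Matrix.single o o b)
      + bm.r (bm.l (Matrix.single o o a) (g (Matrix.single o o b)))
          (Matrix.single o o 1) := by
    intro a b
    have h := hJ (Matrix.single o t a) (Matrix.single t o b)
    simp only [Ems] at h
    rw [hg] at h
    rw [W3 t t (b*a), W3 o t a, W3 t o b] at h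
    have h2 := congrArg
      (fun m => bm.r (bm.l (Matrix.single o o (1:R)) m) (Matrix.single o o 1)) h
    simp only [bm.l_add, bm.r_add, bm.l_r, ← bm.mul_l, ← bm.r_mul] at h2
    simp only [Ems, Emn hot, one_mul, mul_one, zero_l, l_zero, r_zero, zero_r,
      add_zero, zero_add] at h2
    rw [← W2 (a*b)] at h2
    exact h2
  have FINstd : ∀ (i j k l : Fin n) (a b : R),
      g (Matrix.single i j a * Matrix.single k l b)
        = bm.r (g (Matrix.single i j a)) (Matrix.single k l b)
          + bm.l (Matrix.single i j a) (g (Matrix.single k l b)) := by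
    intro i j k l a b
    by_cases hjk : j = k
    · rw [← hjk]
      rw [Ems i j l a b]
      rw [W3 i l (a*b), KEY a b, W3 i j a, W3 j l b]
      simp only [bm.l_add, bm.r_add, bm.l_r, ← bm.mul_l, ← bm.r_mul, Ems, one_mul, mul_one]
    · rw [Emn hjk, f_zero hg, W3 i j a, W3 k l b]
      rw [← bm.r_mul, Emn hjk o l (1:R) b, zero_r, bm.l_r, ← bm.mul_l,
        Emn hjk i o a (1:R), zero_l, r_zero, zero_add]
  have hstd2 : ∀ (i j : Fin n) (a : R) (y : Matrix (Fin n) (Fin n) R),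
      g (Matrix.single i j a * y)
        = bm.r (g (Matrix.single i j a)) y + bm.l (Matrix.single i j a) (g y) := by
    intro i j a y
    set D : Matrix (Fin n) (Fin n) R →+ M := AddMonoidHom.mk'
      (fun z => g (Matrix.single i j a * z) - bm.r (g (Matrix.single i j a)) z
        - bm.l (Matrix.single i j a) (g z))
      (by
        intro z w
        simp only [mul_add, hg, bm.add_r, bm.l_add]
        abel) with hD
    have hDz : ∀ (k l : Fin n) (b : R), D (Matrix.single k l b) = 0 := by
      intro k l b
      show g _ - _ - _ = 0
      rw [FINstd i j k l a b]
      abel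
    have hDy : D y = 0 := by
      conv_lhs => rw [Matrix.matrix_eq_sum_single y]
      rw [map_sum]
      refine Finset.sum_eq_zero fun k _ => ?_
      rw [map_sum]
      exact Finset.sum_eq_zero fun l _ => hDz k l (y k l)
    have h2 : g (Matrix.single i j a * y) - bm.r (g (Matrix.single i j a)) y
        - bm.l (Matrix.single i j a) (g y) = 0 := hDy
    rw [sub_sub] at h2
    exact sub_eq_zero.mp h2
  intro x y
  set D2 : Matrix (Fin n) (Fin n) R →+ M := AddMonoidHom.mk'
    (fun z => g (z * y) - bm.r (g z) y - bm.l z (g y))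
    (by
      intro z w
      simp only [add_mul, hg, bm.r_add, bm.add_l]
      abel) with hD2
  have hD2z : ∀ (i j : Fin n) (a : R), D2 (Matrix.single i j a) = 0 := by
    intro i j a
    show g _ - _ - _ = 0
    rw [hstd2 i j a y]
    abel
  have hD2x : D2 x = 0 := by
    conv_lhs => rw [Matrix.matrix_eq_sum_single x]
    rw [map_sum]
    refine Finset.sum_eq_zero fun i _ => ?_
    rw [map_sum]
    exact Finset.sum_eq_zero fun j _ => hD2z i j (x i j)
  have h2 : g (x * y) - bm.r (g x) y - bm.l x (g y) = 0 := hD2x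
  rw [sub_sub] at h2
  exact sub_eq_zero.mp h2

lemma master (htf : ∀ m : M, m + m = 0 → m = 0) (hn : 2 ≤ n)
    {f : Matrix (Fin n) (Fin n) R → M} (hf : IsAdd f) (hJ : IsJord bm f) :
    ∀ x y, f (x*y) = bm.r (f x) y + bm.l x (f y) := by
  obtain ⟨P, hPa, hPJ, hPun, hPdef⟩ := phaseA htf hf hJ
  obtain ⟨g, hga, hgJ, hgz, hgdef⟩ := normAll htf hPa hPJ hPun ⟨0, by omega⟩
  have hot : (⟨0, by omega⟩ : Fin n) ≠ (⟨1, by omega⟩ : Fin n) := by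
    simp [Fin.ext_iff]
  have hfin := finalD htf hga hgJ hot hgz
  intro x y
  have h1 : f (x*y) - bm.r (f x) y - bm.l x (f y) = 0 := by
    rw [hPdef x y, hgdef x y, hfin x y]
    abel
  rw [sub_sub] at h1
  exact sub_eq_zero.mp h1

end JHelper
theorem stmt12 (R : Type*) [Ring R] (n : ℕ) (hn : 2 ≤ n)
    (M : Type*) [AddCommGroup M] (bm : RingBimod (Matrix (Fin n) (Fin n) R) M)
    (htf : ∀ m : M, m + m = 0 → m = 0)
    (D : Matrix (Fin n) (Fin n) R → M)
    (hadd : ∀ A B, D (A + B) = D A + D B)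
    (hJ : ∀ A B, D (A * B + B * A)
        = bm.r (D A) B + bm.l A (D B) + bm.r (D B) A + bm.l B (D A)
          - bm.l A (bm.r (D 1) B) - bm.l B (bm.r (D 1) A)) :
    ∀ A B, D (A * B) = bm.r (D A) B + bm.l A (D B) - bm.l A (bm.r (D 1) B) := by
  set d : Matrix (Fin n) (Fin n) R → M := fun X => D X - bm.r (D 1) X with hd
  have hda : JHelper.IsAdd d := by
    intro x y
    simp only [hd, hadd, bm.add_r]
    abel
  have hdJ : JHelper.IsJord bm d := by
    intro x y
    simp only [hd]
    rw [hJ x y]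
    simp only [bm.add_r, JHelper.r_sub, JHelper.l_sub, ← bm.r_mul]
    abel
  have hm := JHelper.master htf hn hda hdJ
  intro A B
  have h := hm A B
  simp only [hd, JHelper.r_sub, JHelper.l_sub, ← bm.r_mul] at h
  have h2 := sub_eq_iff_eq_add.mp h
  rw [h2]
  abel
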